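/- arXiv:2007.12109 — 2 statements merged into one kernel-verified Lean document; each statement's English description precedes it below -/
import Mathlib

section
/- Fix k ≥ 2 and positive integers a_1,...,a_r with 1 ≤ r ≤ k. The number of words w over the 2k-letter alphabet such that (i) for each symbol x at most one of x, x̄ occurs in w, (ii) w uses exactly r distinct symbols, and (iii) a_1(w)=a_1, ..., a_r(w)=a_r, equals 2^r · k(k-1)···(k-r+1) · 2^{a_2 - 1} · 3^{a_3 - 1} ··· r^{a_r - 1}. -/
abbrev Letter (k : ℕ) := Fin k × Bool

/-- `a_1(w)+⋯+a_j(w)`: the length of the maximal initial segment of `w` containing at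
most `j` distinct symbols. -/
def aSum {k : ℕ} (j : ℕ) (w : List (Letter k)) : ℕ :=
  Nat.findGreatest (fun m => (w.take m).toFinset.card ≤ j) w.length

/-- The statistic `a_j(w)` of a word. -/
def aStat {k : ℕ} (j : ℕ) (w : List (Letter k)) : ℕ := aSum j w - aSum (j - 1) w

namespace CWP

/-- The property of words being counted. -/
def Good (k r : ℕ) (a : ℕ → ℕ) (w : List (Letter k)) : Prop :=
  (∀ i : Fin k, ¬ ((i, true) ∈ w ∧ (i, false) ∈ w)) ∧
  w.toFinset.card = r ∧
  (∀ j, 1 ≤ j → j ≤ r → aStat j w = a j)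

variable {k : ℕ}

lemma take_sub {α : Type*} (w : List α) {m n : ℕ} (h : m ≤ n) : w.take m ⊆ w.take n := by
  intro x hx
  have hmm : w.take m = (w.take n).take m := by rw [List.take_take, Nat.min_eq_left h]
  exact List.take_subset _ _ (hmm ▸ hx)

lemma card_take_mono (w : List (Letter k)) {m n : ℕ} (h : m ≤ n) :
    (w.take m).toFinset.card ≤ (w.take n).toFinset.card := by
  apply Finset.card_le_card
  intro x hx
  simp only [List.mem_toFinset] at hx ⊢
  exact take_sub w h hx

lemma aSum_le_length (j : ℕ) (w : List (Letter k)) : aSum j w ≤ w.length :=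
  Nat.findGreatest_le _

lemma card_take_aSum_le (j : ℕ) (w : List (Letter k)) :
    ((w.take (aSum j w)).toFinset).card ≤ j := by
  rcases Nat.eq_zero_or_pos (aSum j w) with h | h
  · simp [h]
  · exact Nat.findGreatest_of_ne_zero
      (P := fun m => (w.take m).toFinset.card ≤ j) (n := w.length) rfl (by omega)

lemma aSum_eq {j m : ℕ} {w : List (Letter k)} (hm : m ≤ w.length)
    (h1 : (w.take m).toFinset.card ≤ j)
    (h2 : m = w.length ∨ j < (w.take (m+1)).toFinset.card) :
    aSum j w = m := by
  rw [aSum, Nat.findGreatest_eq_iff]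
  refine ⟨hm, fun _ => h1, fun n hn hn' hP => ?_⟩
  rcases h2 with rfl | h2
  · omega
  · exact absurd (le_trans (card_take_mono w (by omega : m+1 ≤ n)) hP) (by omega)

lemma lt_card_aSum_succ {j : ℕ} {w : List (Letter k)} (h : aSum j w < w.length) :
    j < (w.take (aSum j w + 1)).toFinset.card := by
  have := Nat.findGreatest_is_greatest (P := fun m => (w.take m).toFinset.card ≤ j)
    (n := w.length) (k := aSum j w + 1) (by rw [aSum] at h ⊢; omega) (by omega)
  simpa using Nat.lt_of_not_le this

lemma aSum_eq_length {j : ℕ} {w : List (Letter k)} (h : w.toFinset.card ≤ j) :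
    aSum j w = w.length :=
  aSum_eq le_rfl (by simpa using h) (Or.inl rfl)

lemma aSum_mono {j j' : ℕ} (h : j ≤ j') (w : List (Letter k)) : aSum j w ≤ aSum j' w :=
  Nat.findGreatest_mono (fun _ hn => le_trans hn h) le_rfl

lemma card_take_succ_le (w : List (Letter k)) (m : ℕ) :
    (w.take (m+1)).toFinset.card ≤ (w.take m).toFinset.card + 1 := by
  rcases h : w[m]? with _ | x
  · simp [List.take_succ, h]
  · rw [List.take_succ, h]
    simp only [Option.toList_some, List.toFinset_append]
    refine le_trans (Finset.card_union_le _ _) ?_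
    simp

lemma aSum_zero (w : List (Letter k)) : aSum 0 w = 0 := by
  rw [aSum, Nat.findGreatest_eq_zero_iff]
  intro n hn hle hP
  rcases w with _ | ⟨x, w⟩
  · simp at hle; omega
  · rcases n with _ | n
    · omega
    · simp [List.take_succ_cons] at hP

lemma aSum_profile {r : ℕ} {a : ℕ → ℕ} {w : List (Letter k)}
    (h3 : ∀ j, 1 ≤ j → j ≤ r → aStat j w = a j) :
    ∀ j, j ≤ r → aSum j w = ∑ i ∈ Finset.range j, a (i+1) := by
  intro j
  induction j with
  | zero => intro _; simpa using aSum_zero w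
  | succ j ih =>
    intro hj
    have ihj := ih (by omega)
    have hst := h3 (j+1) (by omega) hj
    have hmono := aSum_mono (Nat.le_succ j) w
    simp only [Nat.succ_eq_add_one] at hmono
    rw [aStat] at hst
    simp only [Nat.add_sub_cancel] at hst
    rw [Finset.sum_range_succ, ← ihj]
    omega

lemma length_good {r : ℕ} {a : ℕ → ℕ} {w : List (Letter k)} (h : Good k r a w) :
    w.length = ∑ i ∈ Finset.range r, a (i+1) := by
  rw [← aSum_profile h.2.2 r le_rfl, aSum_eq_length (le_of_eq h.2.1)]

end CWP
namespace CWP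
variable {k : ℕ}

abbrev Ext (k m : ℕ) (u : List (Letter k)) : Type :=
  Σ ℓ : {ℓ : Letter k // ℓ.1 ∉ u.toFinset.image Prod.fst},
    Fin m → {x : Letter k // x ∈ insert ℓ.1 u.toFinset}

def build {k m : ℕ} {u : List (Letter k)} (e : Ext k m u) : List (Letter k) :=
  u ++ e.1.1 :: (List.ofFn fun i => (e.2 i).1)

lemma build_toFinset {m : ℕ} {u : List (Letter k)} (e : Ext k m u) :
    (build e).toFinset = insert e.1.1 u.toFinset := by
  rcases e with ⟨⟨l, hl⟩, t⟩
  ext x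
  simp only [build, List.toFinset_append, List.toFinset_cons, Finset.mem_union,
    Finset.mem_insert, List.mem_toFinset, List.mem_ofFn]
  constructor
  · rintro (h | h | ⟨i, rfl⟩)
    · exact Or.inr (List.mem_toFinset.mp (List.mem_toFinset.mpr h))
    · exact Or.inl h
    · have := (t i).2
      rcases Finset.mem_insert.mp this with h | h
      · exact Or.inl h
      · exact Or.inr (List.mem_toFinset.mp h)
  · rintro (h | h)
    · exact Or.inr (Or.inl h)
    · exact Or.inl h

lemma good_build {r : ℕ} {a : ℕ → ℕ} {u : List (Letter k)} (hu : Good k r a u)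
    (ha : 1 ≤ a (r+1)) (e : Ext k (a (r+1) - 1) u) :
    Good k (r+1) a (build e) := by
  obtain ⟨⟨l, hl⟩, t⟩ := e
  set w := build (k := k) (m := a (r+1) - 1) (u := u) ⟨⟨l, hl⟩, t⟩ with hw
  set n := u.length with hn
  have hlen : w.length = n + 1 + (a (r+1) - 1) := by
    rw [hw, build]
    simp only [List.length_append, List.length_cons, List.length_ofFn]
    omega
  have hnotmem : l ∉ u.toFinset := fun h => hl (Finset.mem_image_of_mem _ h)
  have htF : w.toFinset = insert l u.toFinset := build_toFinset _
  have hcard : w.toFinset.card = r + 1 := by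
    rw [htF, Finset.card_insert_of_notMem hnotmem, hu.2.1]
  have htake : ∀ m' ≤ n, w.take m' = u.take m' := fun m' h =>
    List.take_append_of_le_length h
  have haSum_le : ∀ j ≤ r, aSum j w = aSum j u := by
    intro j hj
    have h1 : aSum j u ≤ n := aSum_le_length j u
    apply aSum_eq (by omega)
    · rw [htake _ h1]; exact card_take_aSum_le j u
    · right
      rcases lt_or_eq_of_le h1 with hlt | heq
      · rw [htake _ (by omega)]
        exact lt_card_aSum_succ hlt
      · have hcv : u.toFinset.card ≤ j := by
          have := card_take_aSum_le j u
          rwa [heq, List.take_length] at this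
        have hjr : j = r := le_antisymm hj (hu.2.1 ▸ hcv)
        have htk : w.take (n + 1) = u ++ [l] := by
          rw [hw, build, hn, List.take_append]
          simp
        rw [heq, htk, hjr]
        have hins : (u ++ [l]).toFinset = insert l u.toFinset := by
          rw [List.toFinset_append, Finset.union_comm]
          rfl
        rw [hins, Finset.card_insert_of_notMem hnotmem, hu.2.1]
        omega
  have haSum_top : aSum (r+1) w = w.length := aSum_eq_length (le_of_eq hcard)
  have haSum_r : aSum r w = n := by
    rw [haSum_le r le_rfl, aSum_eq_length (le_of_eq hu.2.1)]
  refine ⟨?_, hcard, ?_⟩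
  · rintro i ⟨ht, hf⟩
    have h1 : (i, true) ∈ w.toFinset := List.mem_toFinset.mpr ht
    have h2 : (i, false) ∈ w.toFinset := List.mem_toFinset.mpr hf
    rw [htF] at h1 h2
    rcases Finset.mem_insert.mp h1 with e1 | e1 <;> rcases Finset.mem_insert.mp h2 with e2 | e2
    · rw [← e2] at e1; exact Bool.noConfusion (congrArg Prod.snd e1)
    · exact hl (Finset.mem_image.mpr ⟨(i, false), e2, by rw [← e1]⟩)
    · exact hl (Finset.mem_image.mpr ⟨(i, true), e1, by rw [← e2]⟩)
    · exact hu.1 i ⟨List.mem_toFinset.mp e1, List.mem_toFinset.mp e2⟩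
  · intro j hj1 hjr1
    rcases Nat.lt_or_ge j (r+1) with hcase | hcase
    · have hjr : j ≤ r := by omega
      have e1 := haSum_le j hjr
      have e2 := haSum_le (j-1) (by omega)
      have := hu.2.2 j hj1 hjr
      rw [aStat] at this ⊢
      rw [e1, e2, this]
    · have hj : j = r + 1 := by omega
      subst hj
      rw [aStat]
      simp only [Nat.add_sub_cancel]
      rw [haSum_top, haSum_r, hlen]
      omega

end CWP
namespace CWP
variable {k : ℕ}

lemma finite_good (r : ℕ) (a : ℕ → ℕ) : Finite {u : List (Letter k) // Good k r a u} := by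
  let f : {u : List (Letter k) // Good k r a u} →
      List.Vector (Letter k) (∑ i ∈ Finset.range r, a (i+1)) :=
    fun u => ⟨u.1, length_good u.2⟩
  apply Finite.of_injective f
  intro x y h
  have h2 := congrArg Subtype.val h
  exact Subtype.ext h2

lemma surj_aux (r : ℕ) (a : ℕ → ℕ) (w : List (Letter k)) (hw : Good k (r+1) a w) :
    ∃ d : Σ u : {u : List (Letter k) // Good k r a u}, Ext k (a (r+1) - 1) u.1,
      build d.2 = w := by
  obtain ⟨hwpair, hwcard, hwprof⟩ := hw
  have hn_le : aSum r w ≤ w.length := aSum_le_length r w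
  have hn_lt : aSum r w < w.length := by
    rcases lt_or_eq_of_le hn_le with h | h
    · exact h
    · exfalso
      have h2 := card_take_aSum_le r w
      rw [h, List.take_length, hwcard] at h2; omega
  set n := aSum r w with hn
  set u := w.take n with hu
  have hulen : u.length = n := by rw [hu, List.length_take]; omega
  have hucard : u.toFinset.card = r := by
    have h1 := card_take_aSum_le r w
    rw [← hn, ← hu] at h1
    have h2 := lt_card_aSum_succ (j := r) (w := w) (by rw [← hn]; exact hn_lt)
    rw [← hn] at h2
    have h3 := card_take_succ_le w n
    rw [← hu] at h3
    omega
  have h2' : r < (w.take (n+1)).toFinset.card := by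
    have h2 := lt_card_aSum_succ (j := r) (w := w) (by rw [← hn]; exact hn_lt)
    rwa [← hn] at h2
  have htk1 : w.take (n+1) = u ++ [w[n]] := by
    rw [List.take_succ, List.getElem?_eq_getElem hn_lt]; rfl
  have hins : (w.take (n+1)).toFinset = insert w[n] u.toFinset := by
    rw [htk1, List.toFinset_append, Finset.union_comm]; rfl
  have hlnotu : w[n] ∉ u.toFinset := by
    intro hmem
    rw [hins, Finset.insert_eq_self.mpr hmem, hucard] at h2'
    omega
  have hWF : w.toFinset = insert w[n] u.toFinset := by
    refine (Finset.eq_of_subset_of_card_le ?_ ?_).symm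
    · rw [← hins]
      intro x hx
      exact List.mem_toFinset.mpr (List.take_subset _ _ (List.mem_toFinset.mp hx))
    · rw [hwcard, Finset.card_insert_of_notMem hlnotu, hucard]
  have key : ∀ j' ≤ r, aSum j' u = aSum j' w := by
    intro j' hj'
    have hm0 : aSum j' w ≤ n := le_trans (aSum_mono hj' w) (le_of_eq hn.symm)
    apply aSum_eq
    · rw [hulen]; exact hm0
    · rw [hu, List.take_take, Nat.min_eq_left hm0]
      exact card_take_aSum_le j' w
    · rcases lt_or_eq_of_le hm0 with hlt | heq
      · right
        rw [hu, List.take_take, Nat.min_eq_left (by omega)]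
        exact lt_card_aSum_succ (by omega)
      · left; rw [hulen, heq]
  have hGoodu : Good k r a u := by
    refine ⟨?_, hucard, ?_⟩
    · rintro i ⟨ht, hf⟩
      exact hwpair i ⟨List.take_subset _ _ ht, List.take_subset _ _ hf⟩
    · intro j hj1 hjr
      rw [aStat, key j (by omega), key (j-1) (by omega)]
      exact hwprof j hj1 (by omega)
  have hlimg : w[n].1 ∉ u.toFinset.image Prod.fst := by
    intro hmem
    obtain ⟨x, hxu, hxf⟩ := Finset.mem_image.mp hmem
    have hxw : x ∈ w := List.take_subset _ _ (List.mem_toFinset.mp hxu)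
    have hxne : x ≠ w[n] := fun h => hlnotu (h ▸ hxu)
    obtain ⟨x1, x2⟩ := x
    have hx1 : x1 = w[n].1 := hxf
    have hx2 : x2 ≠ w[n].2 := by
      intro h
      exact hxne (Prod.ext hx1 h)
    have hlw : w[n] ∈ w := List.getElem_mem hn_lt
    have hlw' : (x1, w[n].2) ∈ w := by rw [hx1, Prod.mk.eta]; exact hlw
    cases h2 : x2 <;> cases hb : w[n].2 <;> rw [h2, hb] at hx2 <;> try exact hx2 rfl
    · rw [h2] at hxw
      rw [hb] at hlw'
      exact hwpair x1 ⟨hlw', hxw⟩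
    · rw [h2] at hxw
      rw [hb] at hlw'
      exact hwpair x1 ⟨hxw, hlw'⟩
  have hlen_w : w.length = n + a (r+1) := by
    have h1 : aSum (r+1) w = w.length := aSum_eq_length (le_of_eq hwcard)
    have hp := hwprof (r+1) (by omega) le_rfl
    rw [aStat] at hp
    simp only [Nat.add_sub_cancel] at hp
    rw [← hn] at hp
    omega
  have hb : ∀ i : Fin (a (r+1) - 1), n + 1 + i.1 < w.length := by
    intro i
    have := i.isLt
    omega
  have hmem : ∀ i : Fin (a (r+1) - 1), w[n + 1 + i.1]'(hb i) ∈ insert w[n] u.toFinset := by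
    intro i
    rw [← hWF]
    exact List.mem_toFinset.mpr (List.getElem_mem _)
  refine ⟨⟨⟨u, hGoodu⟩, ⟨w[n], hlimg⟩, fun i => ⟨w[n + 1 + i.1]'(hb i), hmem i⟩⟩, ?_⟩
  rw [build]
  simp only
  conv_rhs => rw [← List.take_append_drop n w]
  rw [← hu]
  congr 1
  rw [List.drop_eq_getElem_cons hn_lt]
  congr 1
  apply List.ext_getElem
  · simp only [List.length_ofFn, List.length_drop]
    omega
  · intro i hi1 hi2
    rw [List.getElem_ofFn]
    simp only
    rw [List.getElem_drop]

end CWP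
namespace CWP
variable {k : ℕ}

lemma card_ext {r : ℕ} {a : ℕ → ℕ} (hrk : r ≤ k) (m : ℕ) {u : List (Letter k)}
    (hu : Good k r a u) :
    Nat.card (Ext k m u) = 2 * (k - r) * (r+1) ^ m := by
  have hinjOn : Set.InjOn Prod.fst (↑u.toFinset : Set (Letter k)) := by
    rintro ⟨x1, x2⟩ hx ⟨y1, y2⟩ hy (h : x1 = y1)
    subst h
    have hx' : (x1, x2) ∈ u := by simpa using hx
    have hy' : (x1, y2) ∈ u := by simpa using hy
    cases x2 <;> cases y2
    · rfl
    · exact absurd ⟨hy', hx'⟩ (hu.1 x1)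
    · exact absurd ⟨hx', hy'⟩ (hu.1 x1)
    · rfl
  have himg : (u.toFinset.image Prod.fst).card = r := by
    rw [Finset.card_image_of_injOn hinjOn, hu.2.1]
  have e1 : {ℓ : Letter k // ℓ.1 ∉ u.toFinset.image Prod.fst} ≃
      (↥(u.toFinset.image Prod.fst)ᶜ × Bool) :=
    { toFun := fun ℓ => (⟨ℓ.1.1, Finset.mem_compl.mpr ℓ.2⟩, ℓ.1.2),
      invFun := fun p => ⟨(p.1.1, p.2), Finset.mem_compl.mp p.1.2⟩,
      left_inv := by rintro ⟨⟨i, b⟩, h⟩; rfl,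
      right_inv := by rintro ⟨⟨i, h⟩, b⟩; rfl }
  have hcf : ∀ ℓ : {ℓ : Letter k // ℓ.1 ∉ u.toFinset.image Prod.fst},
      Fintype.card (Fin m → {x : Letter k // x ∈ insert ℓ.1 u.toFinset}) = (r+1) ^ m := by
    intro ℓ
    have hnot : ℓ.1 ∉ u.toFinset := fun h => ℓ.2 (Finset.mem_image_of_mem _ h)
    have : Fintype.card {x : Letter k // x ∈ insert ℓ.1 u.toFinset} = r + 1 := by
      rw [Fintype.card_coe, Finset.card_insert_of_notMem hnot, hu.2.1]
    have h2 : Fintype.card (Fin m → {x : Letter k // x ∈ insert ℓ.1 u.toFinset}) =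
        Fintype.card {x : Letter k // x ∈ insert ℓ.1 u.toFinset} ^ m := by simp
    rw [h2, this]
  rw [Nat.card_eq_fintype_card, Fintype.card_sigma]
  rw [Finset.sum_congr rfl (fun ℓ _ => hcf ℓ), Finset.sum_const, smul_eq_mul,
    Finset.card_univ, Fintype.card_congr e1, Fintype.card_prod, Fintype.card_coe,
    Finset.card_compl, himg]
  simp only [Fintype.card_bool, Fintype.card_fin]
  ring

lemma step (r : ℕ) (a : ℕ → ℕ) (hrk : r < k) (ha : 1 ≤ a (r+1)) :
    Nat.card {w : List (Letter k) // Good k (r+1) a w} =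
      Nat.card {u : List (Letter k) // Good k r a u} *
        (2 * (k - r) * (r+1) ^ (a (r+1) - 1)) := by
  haveI := finite_good (k := k) r a
  haveI : Fintype {u : List (Letter k) // Good k r a u} := Fintype.ofFinite _
  let F : (Σ u : {u : List (Letter k) // Good k r a u}, Ext k (a (r+1) - 1) u.1) →
      {w : List (Letter k) // Good k (r+1) a w} :=
    fun d => ⟨build d.2, good_build d.1.2 ha d.2⟩
  have hbij : Function.Bijective F := by
    constructor
    · rintro ⟨⟨u, hu⟩, ⟨l, hl⟩, t⟩ ⟨⟨u', hu'⟩, ⟨l', hl'⟩, t'⟩ h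
      have hlist : (u ++ l :: List.ofFn fun i => (t i).1) =
          (u' ++ l' :: List.ofFn fun i => (t' i).1) := congrArg Subtype.val h
      have hlen : u.length = u'.length := by rw [length_good hu, length_good hu']
      obtain ⟨hu_eq, htail⟩ := List.append_inj hlist hlen
      subst hu_eq
      injection htail with hl_eq hofn
      subst hl_eq
      have ht : t = t' := by
        have h2 := List.ofFn_inj.mp hofn
        funext i
        exact Subtype.ext (congrFun h2 i)
      subst ht
      rfl
    · rintro ⟨w, hw⟩
      obtain ⟨d, hd⟩ := surj_aux r a w hw
      exact ⟨d, Subtype.ext hd⟩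
  rw [← Nat.card_eq_of_bijective F hbij]
  rw [Nat.card_eq_fintype_card, Fintype.card_sigma]
  have hc : ∀ u : {u : List (Letter k) // Good k r a u},
      Fintype.card (Ext k (a (r+1) - 1) u.1) = 2 * (k - r) * (r+1) ^ (a (r+1) - 1) := by
    intro u
    rw [← Nat.card_eq_fintype_card]
    exact card_ext (le_of_lt hrk) _ u.2
  rw [Finset.sum_congr rfl (fun u _ => hc u), Finset.sum_const, smul_eq_mul,
    Finset.card_univ, Nat.card_eq_fintype_card]

end CWP
namespace CWP
variable {k : ℕ}

lemma base (a : ℕ → ℕ) : Nat.card {w : List (Letter k) // Good k 0 a w} = 1 := by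
  haveI : Unique {w : List (Letter k) // Good k 0 a w} :=
    { default := ⟨[], ⟨by simp, by simp, by intro j h1 h2; omega⟩⟩,
      uniq := by
        rintro ⟨w, h⟩
        apply Subtype.ext
        have h2 := h.2.1
        rw [Finset.card_eq_zero] at h2
        simpa using h2 }
  exact Nat.card_unique

lemma main (r : ℕ) (a : ℕ → ℕ) (hrk : r ≤ k) (ha : ∀ j, 1 ≤ j → j ≤ r → 1 ≤ a j) :
    Nat.card {w : List (Letter k) // Good k r a w} =
      ∏ j ∈ Finset.range r, (2 * (k - j) * (j+1) ^ (a (j+1) - 1)) := by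
  induction r with
  | zero => simpa using base a
  | succ r ih =>
    rw [step r a (by omega) (ha (r+1) (by omega) le_rfl),
      ih (by omega) (fun j h1 h2 => ha j h1 (by omega)), Finset.prod_range_succ]

lemma prod_eq (r : ℕ) (a : ℕ → ℕ) (hr1 : 1 ≤ r) :
    ∏ j ∈ Finset.range r, (2 * (k - j) * (j+1) ^ (a (j+1) - 1)) =
      2 ^ r * Nat.descFactorial k r * ∏ j ∈ Finset.Icc 2 r, j ^ (a j - 1) := by
  rw [Finset.prod_mul_distrib, Finset.prod_mul_distrib, Finset.prod_const,
    Finset.card_range, Nat.descFactorial_eq_prod_range]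
  congr 1
  have h1 : ∏ j ∈ Finset.range r, (j+1) ^ (a (j+1) - 1) =
      ∏ j ∈ Finset.Icc 1 r, j ^ (a j - 1) := by
    rw [show Finset.Icc 1 r = Finset.Ico 1 (r+1) by rw [Finset.Ico_add_one_right_eq_Icc],
      Finset.prod_Ico_eq_prod_range]
    simp only [Nat.add_sub_cancel]
    exact Finset.prod_congr rfl (fun i _ => by rw [Nat.add_comm 1 i])
  rw [h1]
  have h2 : Finset.Icc 1 r = insert 1 (Finset.Icc 2 r) := by
    ext x
    simp only [Finset.mem_Icc, Finset.mem_insert]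
    omega
  rw [h2, Finset.prod_insert (by simp), one_pow, one_mul]

end CWP

/-- The number of words `w` over the `2k`-letter alphabet such that at most one of each
pair `x, x̄` occurs in `w`, `w` uses exactly `r` distinct symbols, and `a_j(w) = a_j` for
`1 ≤ j ≤ r`, equals `2^r · k(k-1)⋯(k-r+1) · 2^{a_2-1} 3^{a_3-1} ⋯ r^{a_r-1}`. -/
theorem count_words_with_profile (k r : ℕ) (hk : 2 ≤ k) (hr1 : 1 ≤ r) (hrk : r ≤ k)
    (a : ℕ → ℕ) (ha : ∀ j, 1 ≤ j → j ≤ r → 1 ≤ a j) :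
    Nat.card {w : List (Letter k) //
        (∀ i : Fin k, ¬ ((i, true) ∈ w ∧ (i, false) ∈ w)) ∧
        w.toFinset.card = r ∧
        (∀ j, 1 ≤ j → j ≤ r → aStat j w = a j)} =
      2 ^ r * Nat.descFactorial k r * ∏ j ∈ Finset.Icc 2 r, j ^ (a j - 1) := by
  calc Nat.card {w : List (Letter k) //
        (∀ i : Fin k, ¬ ((i, true) ∈ w ∧ (i, false) ∈ w)) ∧
        w.toFinset.card = r ∧
        (∀ j, 1 ≤ j → j ≤ r → aStat j w = a j)}
      = Nat.card {w : List (Letter k) // CWP.Good k r a w} := rfl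
    _ = ∏ j ∈ Finset.range r, (2 * (k - j) * (j+1) ^ (a (j+1) - 1)) := CWP.main r a hrk ha
    _ = 2 ^ r * Nat.descFactorial k r * ∏ j ∈ Finset.Icc 2 r, j ^ (a j - 1) :=
        CWP.prod_eq r a hr1
end

section
/- For k = 2, the asymptotic fraction of letters left unmatched by the one-sided greedy algorithm on a uniform random word over 4 letters equals 3/13; consequently λ_2 ≤ 3/13. -/
open scoped BigOperators

def Letter.bar {k : ℕ} (x : Letter k) : Letter k := (x.1, !x.2)

/-- `M` is an (incomplete) non-crossing matching of the word `X`,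
pairing letters with their inverse letters. -/
def IsNCMatching {k : ℕ} (X : List (Letter k)) (M : Finset (ℕ × ℕ)) : Prop :=
  (∀ p ∈ M, p.1 < p.2 ∧ p.2 < X.length ∧ X[p.1]? = (X[p.2]?).map Letter.bar) ∧
  (∀ p ∈ M, ∀ q ∈ M, p ≠ q → p.1 ≠ q.1 ∧ p.1 ≠ q.2 ∧ p.2 ≠ q.1 ∧ p.2 ≠ q.2) ∧
  (∀ p ∈ M, ∀ q ∈ M, ¬ (p.1 < q.1 ∧ q.1 < p.2 ∧ p.2 < q.2))

/-- minimal number of unmatched letters over all non-crossing matchings of `X`. -/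
noncomputable def ell {k : ℕ} (X : List (Letter k)) : ℕ :=
  sInf {m | ∃ M : Finset (ℕ × ℕ), IsNCMatching X M ∧ m = X.length - 2 * M.card}

/-- `L_k(n)`: the expected value of `ell` over uniformly random words of length `n`. -/
noncomputable def Lk (k n : ℕ) : ℝ :=
  (∑ w : Fin n → Letter k, (ell (List.ofFn w) : ℝ)) / (2 * k) ^ n

noncomputable def lambda (k : ℕ) : ℝ := ⨅ n : ℕ+, Lk k n / n

theorem test : True := trivial

/-- One step of the one-sided greedy algorithm: if the inverse of the arriving letter `x`
occurs in the current word of accessible letters, match `x` with its rightmost occurrence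
(discarding everything to its right); otherwise append `x`. -/
def greedyStep {k : ℕ} (w : List (Letter k)) (x : Letter k) : List (Letter k) :=
  if Letter.bar x ∈ w then w.take (w.length - 1 - w.reverse.idxOf (Letter.bar x))
  else w ++ [x]

/-- The number of letters of `X` left unmatched by the one-sided greedy algorithm:
two letters get matched each time the accessible word shrinks. -/
def greedyUnmatched {k : ℕ} (X : List (Letter k)) : ℕ :=
  X.length - 2 * (X.foldl
    (fun s : List (Letter k) × ℕ => fun x =>
      (greedyStep s.1 x, if (greedyStep s.1 x).length < s.1.length then s.2 + 1 else s.2))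
    (([] : List (Letter k)), 0)).2

namespace GF

abbrev BW := List (Fin 2)

def lastIdx (i : Fin 2) (s : BW) : ℕ := s.length - 1 - s.reverse.idxOf i

def cutF (i : Fin 2) (s : BW) : BW := s.take (lastIdx i s)

def mix (s : BW) : Prop := (0 : Fin 2) ∈ s ∧ (1 : Fin 2) ∈ s

instance : DecidablePred mix := fun _ => instDecidableAnd

lemma lastIdx_lt {i : Fin 2} {s : BW} (h : i ∈ s) : lastIdx i s < s.length := by
  have h1 : 1 ≤ s.length := List.length_pos_iff.mpr (List.ne_nil_of_mem h)
  unfold lastIdx; omega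

lemma cutF_length_lt {i : Fin 2} {s : BW} (h : i ∈ s) : (cutF i s).length < s.length := by
  rw [cutF, List.length_take]
  exact lt_of_le_of_lt (min_le_left _ _) (lastIdx_lt h)

noncomputable def NN : BW → ℝ
  | s => if h : mix s then 1 + (NN (cutF 0 s) + NN (cutF 1 s)) / 2 else 0
termination_by s => s.length
decreasing_by
  · exact cutF_length_lt h.1
  · exact cutF_length_lt h.2

noncomputable def MM : BW → ℝ
  | s => if h : mix s then (MM (cutF 0 s) + MM (cutF 1 s)) / 2 else s.length
termination_by s => s.length
decreasing_by
  · exact cutF_length_lt h.1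
  · exact cutF_length_lt h.2

noncomputable def VV : BW → ℝ
  | s => if h : mix s then (21/40) * (VV (cutF 0 s) + VV (cutF 1 s)) else (10/7) ^ s.length
termination_by s => s.length
decreasing_by
  · exact cutF_length_lt h.1
  · exact cutF_length_lt h.2

lemma NN_mix {s : BW} (h : mix s) : NN s = 1 + (NN (cutF 0 s) + NN (cutF 1 s)) / 2 := by
  rw [NN]; simp [h]

lemma NN_nmix {s : BW} (h : ¬ mix s) : NN s = 0 := by
  rw [NN]; simp [h]

lemma MM_mix {s : BW} (h : mix s) : MM s = (MM (cutF 0 s) + MM (cutF 1 s)) / 2 := by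
  rw [MM]; simp [h]

lemma MM_nmix {s : BW} (h : ¬ mix s) : MM s = s.length := by
  rw [MM]; simp [h]

lemma VV_mix {s : BW} (h : mix s) : VV s = (21/40) * (VV (cutF 0 s) + VV (cutF 1 s)) := by
  rw [VV]; simp [h]

lemma VV_nmix {s : BW} (h : ¬ mix s) : VV s = (10/7) ^ s.length := by
  rw [VV]; simp [h]

lemma cutF_append_self (i : Fin 2) (s : BW) : cutF i (s ++ [i]) = s := by
  have h1 : (s ++ [i]).reverse = i :: s.reverse := by simp
  have h2 : lastIdx i (s ++ [i]) = s.length := by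
    unfold lastIdx
    rw [h1, List.idxOf_cons_self]
    simp
  rw [cutF, h2, List.take_left]

lemma cutF_append_ne {i j : Fin 2} (hij : j ≠ i) (s : BW) (hj : j ∈ s) :
    cutF j (s ++ [i]) = cutF j s := by
  have h1 : (s ++ [i]).reverse = i :: s.reverse := by simp
  have hlt : s.reverse.idxOf j < s.length := by
    have := List.idxOf_lt_length_iff.mpr (List.mem_reverse.mpr hj)
    simpa using this
  have h2 : lastIdx j (s ++ [i]) = lastIdx j s := by
    unfold lastIdx
    rw [h1, List.idxOf_cons_ne _ (Ne.symm hij)]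
    simp only [List.length_append, List.length_singleton]
    omega
  have h3 : lastIdx j s ≤ s.length := by unfold lastIdx; omega
  rw [cutF, h2, List.take_append_of_le_length h3, cutF]

lemma cutF_replicate (i : Fin 2) (m : ℕ) :
    cutF i (List.replicate (m+1) i) = List.replicate m i := by
  have h1 : (List.replicate (m+1) i).reverse = i :: List.replicate m i := by
    rw [List.reverse_replicate]; rfl
  have h2 : lastIdx i (List.replicate (m+1) i) = m := by
    unfold lastIdx; rw [h1, List.idxOf_cons_self]; simp
  rw [cutF, h2, List.take_replicate]; congr 1; omega

lemma fin2_mem_pair {i j : Fin 2} (hij : i ≠ j) (c : Fin 2) : c = i ∨ c = j := by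
  fin_cases i <;> fin_cases j <;> fin_cases c <;> simp_all

lemma not_mix_replicate (i : Fin 2) (m : ℕ) : ¬ mix (List.replicate m i) := by
  rintro ⟨h0, h1⟩
  have e0 := List.eq_of_mem_replicate h0
  have e1 := List.eq_of_mem_replicate h1
  rw [← e0] at e1; exact absurd e1 (by norm_num)

lemma mix_append {s : BW} (h : mix s) (c : Fin 2) : mix (s ++ [c]) :=
  ⟨List.mem_append_left _ h.1, List.mem_append_left _ h.2⟩

lemma mix_const_append {i j : Fin 2} (hij : i ≠ j) (m : ℕ) :
    mix (List.replicate (m+1) i ++ [j]) := by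
  have hi : i ∈ List.replicate (m+1) i ++ [j] :=
    List.mem_append_left _ (List.mem_replicate.mpr ⟨by omega, rfl⟩)
  have hj : j ∈ List.replicate (m+1) i ++ [j] := List.mem_append_right _ (by simp)
  constructor
  · rcases fin2_mem_pair hij 0 with h | h <;> rw [h] <;> assumption
  · rcases fin2_mem_pair hij 1 with h | h <;> rw [h] <;> assumption

lemma pair_sum_swap {i j : Fin 2} (hij : i ≠ j) (f : Fin 2 → ℝ) : f 0 + f 1 = f i + f j := by
  fin_cases i <;> fin_cases j <;> simp_all [add_comm]

/-- values at constant words -/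
lemma NN_replicate (i : Fin 2) (m : ℕ) : NN (List.replicate m i) = 0 :=
  NN_nmix (not_mix_replicate i m)

lemma MM_replicate (i : Fin 2) (m : ℕ) : MM (List.replicate m i) = m := by
  rw [MM_nmix (not_mix_replicate i m), List.length_replicate]

lemma VV_replicate (i : Fin 2) (m : ℕ) : VV (List.replicate m i) = (10/7) ^ m := by
  rw [VV_nmix (not_mix_replicate i m), List.length_replicate]

lemma cutF_const_append_other {i j : Fin 2} (hij : i ≠ j) (m : ℕ) :
    cutF i (List.replicate (m+1) i ++ [j]) = List.replicate m i := by
  rw [cutF_append_ne hij _ (List.mem_replicate.mpr ⟨by omega, rfl⟩), cutF_replicate]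

lemma NN_const_append {i j : Fin 2} (hij : i ≠ j) (m : ℕ) :
    NN (List.replicate (m+1) i ++ [j]) = 1 := by
  rw [NN_mix (mix_const_append hij m)]
  rw [pair_sum_swap hij (fun c => NN (cutF c (List.replicate (m+1) i ++ [j])))]
  rw [cutF_const_append_other hij m, cutF_append_self j _, NN_replicate, NN_replicate]
  norm_num

lemma MM_const_append {i j : Fin 2} (hij : i ≠ j) (m : ℕ) :
    MM (List.replicate (m+1) i ++ [j]) = ((m:ℝ) + (m+1)) / 2 := by
  rw [MM_mix (mix_const_append hij m)]
  rw [pair_sum_swap hij (fun c => MM (cutF c (List.replicate (m+1) i ++ [j])))]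
  rw [cutF_const_append_other hij m, cutF_append_self j _, MM_replicate, MM_replicate]
  push_cast; ring

lemma VV_const_append {i j : Fin 2} (hij : i ≠ j) (m : ℕ) :
    VV (List.replicate (m+1) i ++ [j]) = (21/40) * ((10/7)^m + (10/7)^(m+1)) := by
  rw [VV_mix (mix_const_append hij m)]
  rw [pair_sum_swap hij (fun c => VV (cutF c (List.replicate (m+1) i ++ [j])))]
  rw [cutF_const_append_other hij m, cutF_append_self j _, VV_replicate, VV_replicate]

noncomputable def H1 (s : BW) : ℝ := (6 * NN s + 5 * MM s) / 13

lemma H1_mixed {s : BW} (h : mix s) :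
    H1 (s ++ [0]) + H1 (s ++ [1]) + H1 (cutF 0 s) + H1 (cutF 1 s) = 4 * H1 s + 20/13 - 2 := by
  have h0 : mix (s ++ [0]) := mix_append h 0
  have h1 : mix (s ++ [1]) := mix_append h 1
  have c00 : cutF 0 (s ++ [0]) = s := cutF_append_self 0 s
  have c10 : cutF 1 (s ++ [0]) = cutF 1 s := cutF_append_ne (by norm_num) s h.2
  have c11 : cutF 1 (s ++ [1]) = s := cutF_append_self 1 s
  have c01 : cutF 0 (s ++ [1]) = cutF 0 s := cutF_append_ne (by norm_num) s h.1
  unfold H1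
  rw [NN_mix h0, NN_mix h1, MM_mix h0, MM_mix h1, c00, c10, c11, c01, NN_mix h, MM_mix h]
  ring

lemma H1_replicate (i : Fin 2) (m : ℕ) : H1 (List.replicate m i) = 5 * m / 13 := by
  unfold H1; rw [NN_replicate, MM_replicate]; ring

lemma H1_const {i j : Fin 2} (hij : i ≠ j) (m : ℕ) :
    H1 (List.replicate (m+2) i) + H1 (List.replicate m i)
      + 2 * H1 (List.replicate (m+1) i ++ [j])
      = 4 * H1 (List.replicate (m+1) i) + 20/13 - 1 := by
  unfold H1
  rw [NN_replicate, MM_replicate, NN_replicate, MM_replicate,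
    NN_const_append hij, MM_const_append hij, NN_replicate, MM_replicate]
  push_cast; ring

lemma H1_single (c : Fin 2) : H1 [c] = 5/13 := by
  have : ([c] : BW) = List.replicate 1 c := rfl
  rw [this, H1_replicate]; norm_num

lemma VV_mixed_sum {s : BW} (h : mix s) :
    VV (s ++ [0]) + VV (s ++ [1]) + VV (cutF 0 s) + VV (cutF 1 s) = (1661/420) * VV s := by
  have h0 : mix (s ++ [0]) := mix_append h 0
  have h1 : mix (s ++ [1]) := mix_append h 1
  have c00 : cutF 0 (s ++ [0]) = s := cutF_append_self 0 s
  have c10 : cutF 1 (s ++ [0]) = cutF 1 s := cutF_append_ne (by norm_num) s h.2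
  have c11 : cutF 1 (s ++ [1]) = s := cutF_append_self 1 s
  have c01 : cutF 0 (s ++ [1]) = cutF 0 s := cutF_append_ne (by norm_num) s h.1
  rw [VV_mix h0, VV_mix h1, c00, c10, c11, c01, VV_mix h]
  ring

lemma VV_const_sum {i j : Fin 2} (hij : i ≠ j) (m : ℕ) :
    VV (List.replicate (m+2) i) + VV (List.replicate m i)
      + 2 * VV (List.replicate (m+1) i ++ [j])
      ≤ (1661/420) * VV (List.replicate (m+1) i) := by
  rw [VV_replicate, VV_replicate, VV_replicate, VV_const_append hij]
  have hp : (0:ℝ) ≤ (10/7) ^ m := by positivity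
  have e2 : ((10:ℝ)/7) ^ (m+2) = (10/7)^m * (10/7)^2 := by rw [pow_add]
  have e1 : ((10:ℝ)/7) ^ (m+1) = (10/7)^m * (10/7) := by rw [pow_succ]
  rw [e2, e1]
  nlinarith [hp]

lemma VV_single (c : Fin 2) : VV [c] = 10/7 := by
  have : ([c] : BW) = List.replicate 1 c := rfl
  rw [this, VV_replicate]; norm_num

lemma bernoulli_aux (m : ℕ) : (3/7) * (m:ℝ) + 1 ≤ (10/7) ^ m := by
  have h := one_add_mul_le_pow (a := (3/7 : ℝ)) (by norm_num) m
  have : ((1:ℝ) + 3/7) = 10/7 := by norm_num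
  rw [this] at h
  linarith

lemma base_bounds (s : BW) :
    0 ≤ NN s ∧ 0 ≤ MM s ∧ 1 ≤ VV s ∧ (1/21) * NN s + (3/7) * MM s + 1 ≤ VV s := by
  have const_case : ∀ t : BW, ¬ mix t →
      0 ≤ NN t ∧ 0 ≤ MM t ∧ 1 ≤ VV t ∧ (1/21) * NN t + (3/7) * MM t + 1 ≤ VV t := by
    intro t ht
    rw [NN_nmix ht, MM_nmix ht, VV_nmix ht]
    have hb := bernoulli_aux t.length
    have hl : (0:ℝ) ≤ t.length := by positivity
    refine ⟨le_refl 0, hl, by linarith, by linarith⟩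
  have key : ∀ n (s : BW), s.length ≤ n →
      0 ≤ NN s ∧ 0 ≤ MM s ∧ 1 ≤ VV s ∧ (1/21) * NN s + (3/7) * MM s + 1 ≤ VV s := by
    intro n
    induction n with
    | zero =>
      intro s hs
      have hnm : ¬ mix s := by
        intro h
        have := List.length_pos_iff.mpr (List.ne_nil_of_mem h.1)
        omega
      exact const_case s hnm
    | succ n ih =>
      intro s hs
      by_cases h : mix s
      · have l0 := cutF_length_lt h.1
        have l1 := cutF_length_lt h.2
        obtain ⟨a0, b0, c0, d0⟩ := ih (cutF 0 s) (by omega)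
        obtain ⟨a1, b1, c1, d1⟩ := ih (cutF 1 s) (by omega)
        rw [NN_mix h, MM_mix h, VV_mix h]
        refine ⟨by linarith, by linarith, by linarith, by linarith⟩
      · exact const_case s h
  exact key s.length s le_rfl

lemma H1_nonneg (s : BW) : 0 ≤ H1 s := by
  obtain ⟨a, b, _, _⟩ := base_bounds s
  unfold H1; linarith

lemma H1_le_VV (s : BW) : H1 s ≤ (126/13) * (VV s - 1) := by
  obtain ⟨a, b, _, d⟩ := base_bounds s
  unfold H1; linarith

abbrev L2 := Letter 2

lemma bar_bar (x : L2) : Letter.bar (Letter.bar x) = x := by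
  cases x; simp [Letter.bar]

lemma bar_ne (x : L2) : Letter.bar x ≠ x := by
  rcases x with ⟨i, b⟩; simp [Letter.bar]

def Inv (w : List L2) : Prop := ∀ x ∈ w, Letter.bar x ∉ w

def proj (w : List L2) : BW := w.map Prod.fst

lemma proj_append (w : List L2) (x : L2) : proj (w ++ [x]) = proj w ++ [x.1] := by
  simp [proj]

lemma Inv_nil : Inv ([] : List L2) := by intro x hx; simp at hx

lemma Inv_step {w : List L2} (hw : Inv w) (x : L2) : Inv (greedyStep w x) := by
  unfold greedyStep
  split
  · intro y hy hby
    exact hw y (List.mem_of_mem_take hy) (List.mem_of_mem_take hby)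
  · next hnx =>
    intro y hy
    rcases List.mem_append.mp hy with hyw | hyx
    · intro hby
      rcases List.mem_append.mp hby with hbw | hbx
      · exact hw y hyw hbw
      · have e : Letter.bar y = x := by simpa using hbx
        have : y = Letter.bar x := by rw [← e, bar_bar]
        exact hnx (this ▸ hyw)
    · have hyx' : y = x := by simpa using hyx
      subst hyx'
      intro hby
      rcases List.mem_append.mp hby with hbw | hbx
      · exact hnx hbw
      · exact bar_ne y (by simpa using hbx)

def stw (X : List L2) : List L2 := X.foldl greedyStep []

lemma Inv_foldl : ∀ (X : List L2) (w : List L2), Inv w → Inv (X.foldl greedyStep w)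
  | [], _, h => h
  | x :: t, w, h => Inv_foldl t _ (Inv_step h x)

lemma Inv_stw (X : List L2) : Inv (stw X) := Inv_foldl X [] Inv_nil

lemma stw_append (X : List L2) (x : L2) : stw (X ++ [x]) = greedyStep (stw X) x := by
  unfold stw; rw [List.foldl_append]; rfl

lemma class_unique {w : List L2} (hw : Inv w) {x : L2} (hx : Letter.bar x ∈ w) :
    ∀ y ∈ w, y.1 = x.1 → y = Letter.bar x := by
  intro y hy hc
  have hxw : x ∉ w := by
    intro hxx
    exact hw x hxx hx
  rcases y with ⟨i, b⟩; rcases x with ⟨j, c⟩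
  simp only at hc
  subst hc
  by_cases hbc : b = c
  · subst hbc; exact absurd hy hxw
  · have : b = !c := by cases b <;> cases c <;> simp_all
    rw [this]; rfl

lemma L2_beq_true : ∀ a : L2, (a == a) = true := by decide

lemma L2_beq_false : ∀ a b : L2, b ≠ a → (b == a) = false := by decide

lemma L2_indexOf_cons_self (a : L2) (l : List L2) : List.idxOf a (a :: l) = 0 := by
  rw [List.idxOf_cons, L2_beq_true]
  rfl

lemma L2_indexOf_cons_ne {a b : L2} (l : List L2) (h : b ≠ a) :
    List.idxOf a (b :: l) = List.idxOf a l + 1 := by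
  rw [List.idxOf_cons, L2_beq_false _ _ h]
  rfl

lemma indexOf_proj (a : L2) : ∀ (l : List L2), (∀ y ∈ l, y.1 = a.1 → y = a) →
    List.idxOf a.1 (l.map Prod.fst) = List.idxOf a l
  | [], _ => rfl
  | y :: t, h => by
    by_cases hya : y = a
    · subst hya
      rw [List.map_cons, List.idxOf_cons_self, L2_indexOf_cons_self]
    · have hcl : y.1 ≠ a.1 := fun hc => hya (h y (List.mem_cons_self) hc)
      rw [List.map_cons, List.idxOf_cons_ne _ hcl, L2_indexOf_cons_ne _ hya,
        indexOf_proj a t (fun z hz hc => h z (List.mem_cons_of_mem y hz) hc)]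

lemma gs_cut_proj {w : List L2} (hw : Inv w) {x : L2} (hx : Letter.bar x ∈ w) :
    proj (greedyStep w x) = cutF x.1 (proj w) := by
  have hidx : (proj w).reverse.idxOf x.1 = w.reverse.idxOf (Letter.bar x) := by
    have h1 : (proj w).reverse = w.reverse.map Prod.fst := by
      simp [proj]
    rw [h1]
    have h2 := indexOf_proj (Letter.bar x) w.reverse
      (fun y hy hc => class_unique hw hx y (List.mem_reverse.mp hy) hc)
    exact h2
  unfold greedyStep
  rw [if_pos hx]
  unfold cutF lastIdx
  rw [hidx]
  simp [proj, List.map_take]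

lemma gs_cut_len {w : List L2} {x : L2} (hx : Letter.bar x ∈ w) :
    (greedyStep w x).length < w.length := by
  have h1 : 1 ≤ w.length := List.length_pos_iff.mpr (List.ne_nil_of_mem hx)
  unfold greedyStep
  rw [if_pos hx, List.length_take]
  omega

lemma gs_app_len {w : List L2} {x : L2} (hx : Letter.bar x ∉ w) :
    (greedyStep w x).length = w.length + 1 := by
  unfold greedyStep
  rw [if_neg hx]
  simp

lemma pair_contrib (G : BW → ℝ) {w : List L2} (hw : Inv w) (i : Fin 2) :
    G (proj (greedyStep w (i, false))) + G (proj (greedyStep w (i, true))) =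
      if i ∈ proj w then G (proj w ++ [i]) + G (cutF i (proj w))
      else 2 * G (proj w ++ [i]) := by
  by_cases hp : i ∈ proj w
  · rw [if_pos hp]
    obtain ⟨y, hyw, hy1⟩ := List.mem_map.mp hp
    have hy : ((i, y.2) : L2) ∈ w := by
      have : y = (i, y.2) := by rw [← hy1]
      rwa [← this]
    have hcut : Letter.bar (i, !y.2) ∈ w := by
      have : Letter.bar ((i, !y.2) : L2) = (i, y.2) := by simp [Letter.bar]
      rw [this]; exact hy
    have happ : Letter.bar (i, y.2) ∉ w := hw _ hy
    have e1 : proj (greedyStep w (i, !y.2)) = cutF i (proj w) := gs_cut_proj hw hcut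
    have e2 : proj (greedyStep w (i, y.2)) = proj w ++ [i] := by
      unfold greedyStep; rw [if_neg happ]; exact proj_append w (i, y.2)
    rcases hb : y.2 with _ | _
    · rw [hb] at e1 e2
      simp only [Bool.not_false] at e1
      rw [e2, e1]
    · rw [hb] at e1 e2
      simp only [Bool.not_true] at e1
      rw [e2, e1]
      ring
  · rw [if_neg hp]
    have h1 : Letter.bar ((i, false) : L2) ∉ w := by
      intro hm
      exact hp (List.mem_map.mpr ⟨_, hm, rfl⟩)
    have h2 : Letter.bar ((i, true) : L2) ∉ w := by
      intro hm
      exact hp (List.mem_map.mpr ⟨_, hm, rfl⟩)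
    have e1 : proj (greedyStep w (i, false)) = proj w ++ [i] := by
      unfold greedyStep; rw [if_neg h1]; exact proj_append w (i, false)
    have e2 : proj (greedyStep w (i, true)) = proj w ++ [i] := by
      unfold greedyStep; rw [if_neg h2]; exact proj_append w (i, true)
    rw [e1, e2]; ring

lemma pair_contrib_cnt {w : List L2} (hw : Inv w) (i : Fin 2) :
    ((if (greedyStep w (i, false)).length < w.length then (1:ℝ) else 0) +
     (if (greedyStep w (i, true)).length < w.length then (1:ℝ) else 0)) =
      if i ∈ proj w then 1 else 0 := by
  by_cases hp : i ∈ proj w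
  · rw [if_pos hp]
    obtain ⟨y, hyw, hy1⟩ := List.mem_map.mp hp
    have hy : ((i, y.2) : L2) ∈ w := by
      have : y = (i, y.2) := by rw [← hy1]
      rwa [← this]
    have hcut : Letter.bar (i, !y.2) ∈ w := by
      have : Letter.bar ((i, !y.2) : L2) = (i, y.2) := by simp [Letter.bar]
      rw [this]; exact hy
    have happ : Letter.bar (i, y.2) ∉ w := hw _ hy
    have e1 := gs_cut_len hcut
    have e2 := gs_app_len happ
    rcases hb : y.2 with _ | _ <;> rw [hb] at e1 e2 <;>
      simp only [Bool.not_false, Bool.not_true] at e1 <;>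
      rw [if_pos e1, if_neg (by omega)] <;> ring
  · rw [if_neg hp]
    have h1 : Letter.bar ((i, false) : L2) ∉ w := fun hm => hp (List.mem_map.mpr ⟨_, hm, rfl⟩)
    have h2 : Letter.bar ((i, true) : L2) ∉ w := fun hm => hp (List.mem_map.mpr ⟨_, hm, rfl⟩)
    have e1 := gs_app_len h1
    have e2 := gs_app_len h2
    rw [if_neg (by omega), if_neg (by omega)]
    norm_num

def dd (s : BW) : ℝ :=
  (if (0 : Fin 2) ∈ s then 1 else 0) + (if (1 : Fin 2) ∈ s then 1 else 0)

lemma sum_L2 (f : L2 → ℝ) :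
    ∑ x : L2, f x = (f (0, false) + f (0, true)) + (f (1, false) + f (1, true)) := by
  rw [Fintype.sum_prod_type, Fin.sum_univ_two]
  simp only [Fintype.sum_bool]
  ring

lemma proj_const {w : List L2} {i j : Fin 2} (hij : i ≠ j) (h0 : i ∈ proj w)
    (h1 : j ∉ proj w) : ∃ m, proj w = List.replicate (m+1) i := by
  have hall : ∀ c ∈ proj w, c = i := by
    intro c hc
    rcases fin2_mem_pair hij c with h | h
    · exact h
    · exact absurd (h ▸ hc) h1
  have hrep := List.eq_replicate_of_mem hall
  have hlen : 1 ≤ (proj w).length := List.length_pos_iff.mpr (List.ne_nil_of_mem h0)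
  refine ⟨(proj w).length - 1, ?_⟩
  have h2 : (proj w).length - 1 + 1 = (proj w).length := by omega
  rw [h2]
  exact hrep

lemma proj_nil {w : List L2} (h0 : (0 : Fin 2) ∉ proj w) (h1 : (1 : Fin 2) ∉ proj w) :
    proj w = [] := by
  rcases hp : proj w with _ | ⟨c, t⟩
  · rfl
  · exfalso
    rcases fin2_mem_pair (show (0 : Fin 2) ≠ 1 by norm_num) c with h | h
    · exact h0 (h ▸ (hp ▸ List.mem_cons_self))
    · exact h1 (h ▸ (hp ▸ List.mem_cons_self))

lemma repl_append_same (i : Fin 2) (m : ℕ) :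
    List.replicate (m+1) i ++ [i] = List.replicate (m+2) i := by
  rw [← List.replicate_succ']

lemma key_H1 {w : List L2} (hw : Inv w) :
    ∑ x : L2, H1 (proj (greedyStep w x)) = 4 * H1 (proj w) + 20/13 - dd (proj w) := by
  rw [sum_L2, pair_contrib H1 hw 0, pair_contrib H1 hw 1]
  unfold dd
  by_cases h0 : (0 : Fin 2) ∈ proj w <;> by_cases h1 : (1 : Fin 2) ∈ proj w
  · rw [if_pos h0, if_pos h1, if_pos h0, if_pos h1]
    have := H1_mixed ⟨h0, h1⟩
    linarith
  · obtain ⟨m, hm⟩ := proj_const (show (0:Fin 2) ≠ 1 by norm_num) h0 h1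
    rw [if_pos h0, if_neg h1, if_pos h0, if_neg h1, hm, repl_append_same, cutF_replicate]
    have := H1_const (show (0:Fin 2) ≠ 1 by norm_num) m
    linarith
  · obtain ⟨m, hm⟩ := proj_const (show (1:Fin 2) ≠ 0 by norm_num) h1 h0
    rw [if_pos h1, if_neg h0, if_neg h0, if_pos h1, hm, repl_append_same, cutF_replicate]
    have := H1_const (show (1:Fin 2) ≠ 0 by norm_num) m
    linarith
  · have hnil := proj_nil h0 h1
    rw [if_neg h0, if_neg h1, if_neg h0, if_neg h1, hnil]
    simp only [List.nil_append]
    rw [H1_single, H1_single]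
    have : H1 [] = 0 := by
      have : ([] : BW) = List.replicate 0 0 := rfl
      rw [this, H1_replicate]; norm_num
    rw [this]
    norm_num

lemma key_VV {w : List L2} (hw : Inv w) :
    ∑ x : L2, VV (proj (greedyStep w x)) ≤ (1661/420) * VV (proj w) + 739/420 := by
  rw [sum_L2, pair_contrib VV hw 0, pair_contrib VV hw 1]
  by_cases h0 : (0 : Fin 2) ∈ proj w <;> by_cases h1 : (1 : Fin 2) ∈ proj w
  · rw [if_pos h0, if_pos h1]
    have := VV_mixed_sum ⟨h0, h1⟩
    linarith
  · obtain ⟨m, hm⟩ := proj_const (show (0:Fin 2) ≠ 1 by norm_num) h0 h1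
    rw [if_pos h0, if_neg h1, hm, repl_append_same, cutF_replicate]
    have := VV_const_sum (show (0:Fin 2) ≠ 1 by norm_num) m
    linarith
  · obtain ⟨m, hm⟩ := proj_const (show (1:Fin 2) ≠ 0 by norm_num) h1 h0
    rw [if_pos h1, if_neg h0, hm, repl_append_same, cutF_replicate]
    have := VV_const_sum (show (1:Fin 2) ≠ 0 by norm_num) m
    linarith
  · have hnil := proj_nil h0 h1
    rw [if_neg h0, if_neg h1, hnil]
    simp only [List.nil_append]
    rw [VV_single, VV_single]
    have : VV ([] : BW) = 1 := by
      have h : (([] : BW)) = List.replicate 0 0 := rfl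
      rw [h, VV_replicate]; norm_num
    rw [this]
    norm_num

lemma key_cnt {w : List L2} (hw : Inv w) :
    ∑ x : L2, (if (greedyStep w x).length < w.length then (1:ℝ) else 0) = dd (proj w) := by
  rw [sum_L2, pair_contrib_cnt hw 0, pair_contrib_cnt hw 1]
  rfl

lemma ofFn_snoc {t : ℕ} (u : Fin t → L2) (x : L2) :
    List.ofFn (Fin.snoc u x) = List.ofFn u ++ [x] := by
  rw [List.ofFn_succ']
  simp [Fin.snoc_castSucc, Fin.snoc_last]

lemma sum_snoc (F : List L2 → ℝ) (t : ℕ) :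
    ∑ u : Fin (t+1) → L2, F (List.ofFn u)
      = ∑ u : Fin t → L2, ∑ x : L2, F (List.ofFn u ++ [x]) := by
  rw [← Equiv.sum_comp (Fin.snocEquiv (fun _ => L2)) (fun u => F (List.ofFn u)),
    Fintype.sum_prod_type, Finset.sum_comm]
  refine Finset.sum_congr rfl (fun u _ => Finset.sum_congr rfl (fun x _ => ?_))
  congr 1
  have h : ((Fin.snocEquiv (fun _ => L2)) (x, u) : Fin (t+1) → L2) = Fin.snoc u x := rfl
  rw [h, ofFn_snoc]

lemma sum_fin0 (F : List L2 → ℝ) : ∑ u : Fin 0 → L2, F (List.ofFn u) = F [] := by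
  rw [Fintype.sum_unique (fun u : Fin 0 → L2 => F (List.ofFn u))]
  congr 1

lemma card_univ_fun (t : ℕ) : (Finset.univ : Finset (Fin t → L2)).card = 4 ^ t := by
  rw [Finset.card_univ, Fintype.card_fun]
  norm_num [Fintype.card_prod]

lemma VV_nil : VV (proj ([] : List L2)) = 1 := by
  have h : proj ([] : List L2) = List.replicate 0 0 := rfl
  rw [h, VV_replicate]; norm_num

lemma H1_nil : H1 (proj ([] : List L2)) = 0 := by
  have h : proj ([] : List L2) = List.replicate 0 0 := rfl
  rw [h, H1_replicate]; norm_num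

noncomputable def AS (t : ℕ) : ℝ := ∑ u : Fin t → L2, H1 (proj (stw (List.ofFn u)))
noncomputable def VS (t : ℕ) : ℝ := ∑ u : Fin t → L2, VV (proj (stw (List.ofFn u)))
noncomputable def DS (t : ℕ) : ℝ := ∑ u : Fin t → L2, dd (proj (stw (List.ofFn u)))

lemma AS_rec (t : ℕ) : AS (t+1) = 4 * AS t + (20/13) * 4^t - DS t := by
  unfold AS DS
  rw [sum_snoc (fun l => H1 (proj (stw l))) t]
  have step : ∀ u : Fin t → L2,
      (∑ x : L2, H1 (proj (stw (List.ofFn u ++ [x]))))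
        = 4 * H1 (proj (stw (List.ofFn u))) + 20/13 - dd (proj (stw (List.ofFn u))) := by
    intro u
    rw [Finset.sum_congr rfl (fun x _ => by rw [stw_append (List.ofFn u) x])]
    exact key_H1 (Inv_stw (List.ofFn u))
  rw [Finset.sum_congr rfl (fun u _ => step u)]
  rw [Finset.sum_sub_distrib, Finset.sum_add_distrib, ← Finset.mul_sum,
    Finset.sum_const, card_univ_fun]
  push_cast
  ring

lemma VS_rec (t : ℕ) : VS (t+1) ≤ (1661/420) * VS t + (739/420) * 4^t := by
  unfold VS
  rw [sum_snoc (fun l => VV (proj (stw l))) t]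
  have step : ∀ u : Fin t → L2,
      (∑ x : L2, VV (proj (stw (List.ofFn u ++ [x]))))
        ≤ (1661/420) * VV (proj (stw (List.ofFn u))) + 739/420 := by
    intro u
    rw [Finset.sum_congr rfl (fun x _ => by rw [stw_append (List.ofFn u) x])]
    exact key_VV (Inv_stw (List.ofFn u))
  calc (∑ u : Fin t → L2, ∑ x : L2, VV (proj (stw (List.ofFn u ++ [x]))))
      ≤ ∑ u : Fin t → L2, ((1661/420) * VV (proj (stw (List.ofFn u))) + 739/420) :=
        Finset.sum_le_sum (fun u _ => step u)
    _ = (1661/420) * (∑ u : Fin t → L2, VV (proj (stw (List.ofFn u)))) + (739/420) * 4^t := by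
        rw [Finset.sum_add_distrib, ← Finset.mul_sum, Finset.sum_const, card_univ_fun]
        push_cast
        ring

lemma AS_nonneg (t : ℕ) : 0 ≤ AS t :=
  Finset.sum_nonneg (fun u _ => H1_nonneg _)

lemma VS_le (t : ℕ) : VS t ≤ (739/19) * 4^t := by
  induction t with
  | zero =>
    unfold VS
    rw [sum_fin0 (fun l => VV (proj (stw l)))]
    have h : stw ([] : List L2) = [] := rfl
    rw [h, VV_nil]
    norm_num
  | succ t ih =>
    have h := VS_rec t
    have hp : (0:ℝ) < 4^t := by positivity
    calc VS (t+1) ≤ (1661/420) * VS t + (739/420) * 4^t := h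
      _ ≤ (1661/420) * ((739/19) * 4^t) + (739/420) * 4^t := by nlinarith [ih]
      _ = (739/19) * 4^(t+1) := by rw [pow_succ]; ring

lemma AS_le (t : ℕ) : AS t ≤ (90720/247) * 4^t := by
  have h1 : AS t ≤ ∑ u : Fin t → L2, (126/13) * (VV (proj (stw (List.ofFn u))) - 1) :=
    Finset.sum_le_sum (fun u _ => H1_le_VV _)
  have h2 : (∑ u : Fin t → L2, (126/13) * (VV (proj (stw (List.ofFn u))) - 1))
      = (126/13) * (VS t - 4^t) := by
    rw [← Finset.mul_sum, Finset.sum_sub_distrib, Finset.sum_const, card_univ_fun]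
    unfold VS
    push_cast
    ring
  have h3 := VS_le t
  have hp : (0:ℝ) ≤ 4^t := by positivity
  rw [h2] at h1
  nlinarith [h1, h3]

def cnt (X : List L2) : ℕ :=
  (X.foldl (fun s : List L2 × ℕ => fun x =>
      (greedyStep s.1 x, if (greedyStep s.1 x).length < s.1.length then s.2 + 1 else s.2))
    (([] : List L2), 0)).2

lemma greedyUnmatched_eq (X : List L2) : greedyUnmatched X = X.length - 2 * cnt X := rfl

lemma gfold_fst : ∀ (X : List L2) (p : List L2 × ℕ),
    (X.foldl (fun s : List L2 × ℕ => fun x =>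
      (greedyStep s.1 x, if (greedyStep s.1 x).length < s.1.length then s.2 + 1 else s.2)) p).1
    = X.foldl greedyStep p.1
  | [], _ => rfl
  | x :: t, p => by
    rw [List.foldl_cons, List.foldl_cons]
    exact gfold_fst t _

lemma cnt_append (X : List L2) (x : L2) :
    cnt (X ++ [x]) = if (greedyStep (stw X) x).length < (stw X).length
      then cnt X + 1 else cnt X := by
  unfold cnt
  rw [List.foldl_append]
  simp only [List.foldl_cons, List.foldl_nil]
  rw [gfold_fst X (([] : List L2), 0)]
  rfl

noncomputable def CS (t : ℕ) : ℝ := ∑ u : Fin t → L2, (cnt (List.ofFn u) : ℝ)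

lemma card_L2 : (Finset.univ : Finset L2).card = 4 := rfl

lemma CS_rec (t : ℕ) : CS (t+1) = 4 * CS t + DS t := by
  unfold CS DS
  rw [sum_snoc (fun l => (cnt l : ℝ)) t]
  have step : ∀ u : Fin t → L2, (∑ x : L2, ((cnt (List.ofFn u ++ [x]) : ℝ)))
      = 4 * (cnt (List.ofFn u) : ℝ) + dd (proj (stw (List.ofFn u))) := by
    intro u
    have e : ∀ x : L2, (cnt (List.ofFn u ++ [x]) : ℝ)
        = (cnt (List.ofFn u) : ℝ) +
          (if (greedyStep (stw (List.ofFn u)) x).length < (stw (List.ofFn u)).length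
            then (1:ℝ) else 0) := by
      intro x
      rw [cnt_append]
      split
      · push_cast; ring
      · push_cast; ring
    rw [Finset.sum_congr rfl (fun x _ => e x)]
    rw [Finset.sum_add_distrib, Finset.sum_const, key_cnt (Inv_stw (List.ofFn u)), card_L2]
    push_cast
    ring
  rw [Finset.sum_congr rfl (fun u _ => step u)]
  rw [Finset.sum_add_distrib, ← Finset.mul_sum]

lemma CS_closed (n : ℕ) : CS n = (5 * n / 13) * 4^n - AS n := by
  induction n with
  | zero =>
    unfold CS AS
    rw [sum_fin0 (fun l => (cnt l : ℝ)), sum_fin0 (fun l => H1 (proj (stw l)))]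
    have h1 : cnt ([] : List L2) = 0 := rfl
    have h2 : stw ([] : List L2) = [] := rfl
    rw [h1, h2, H1_nil]
    norm_num
  | succ n ih =>
    rw [CS_rec n, ih]
    have hA := AS_rec n
    rw [pow_succ]
    push_cast
    linear_combination hA

lemma gs_len_le (w : List L2) (x : L2) : (greedyStep w x).length ≤ w.length + 1 := by
  unfold greedyStep
  split
  · rw [List.length_take]; omega
  · simp

lemma cnt_bound (X : List L2) : 2 * cnt X + (stw X).length ≤ X.length := by
  induction X using List.reverseRecOn with
  | nil => simp [cnt, stw]
  | append_singleton X x ih =>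
    rw [cnt_append, stw_append]
    have hle := gs_len_le (stw X) x
    rw [List.length_append, List.length_singleton]
    by_cases h : (greedyStep (stw X) x).length < (stw X).length
    · rw [if_pos h]; omega
    · rw [if_neg h]; omega

lemma GS_closed (n : ℕ) : (∑ u : Fin n → L2, (greedyUnmatched (List.ofFn u) : ℝ))
    = (3 * n / 13) * 4^n + 2 * AS n := by
  have e : ∀ u : Fin n → L2,
      (greedyUnmatched (List.ofFn u) : ℝ) = n - 2 * (cnt (List.ofFn u) : ℝ) := by
    intro u
    have hb := cnt_bound (List.ofFn u)
    have hlen : (List.ofFn u).length = n := List.length_ofFn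
    rw [greedyUnmatched_eq, hlen]
    rw [hlen] at hb
    have h2 : 2 * cnt (List.ofFn u) ≤ n := by omega
    push_cast [Nat.cast_sub h2]
    ring
  rw [Finset.sum_congr rfl (fun u _ => e u)]
  rw [Finset.sum_sub_distrib, Finset.sum_const, card_univ_fun, ← Finset.mul_sum]
  have hCS : (∑ u : Fin n → L2, (cnt (List.ofFn u) : ℝ)) = CS n := rfl
  rw [hCS, CS_closed n]
  push_cast
  ring

lemma expr_eq (n : ℕ) (hn : 1 ≤ n) :
    (∑ w : Fin n → Letter 2, (greedyUnmatched (List.ofFn w) : ℝ)) / ((2 * 2) ^ n * n)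
      = 3/13 + 2 * AS n / (4^n * n) := by
  have h4 : ((2:ℝ) * 2) ^ n = 4 ^ n := by norm_num
  rw [h4, GS_closed n]
  have hp : (0:ℝ) < 4^n := by positivity
  have hnp : (0:ℝ) < n := by exact_mod_cast hn
  field_simp

lemma tendsto_part : Filter.Tendsto (fun n : ℕ =>
      (∑ w : Fin n → Letter 2, (greedyUnmatched (List.ofFn w) : ℝ)) / ((2 * 2) ^ n * n))
    Filter.atTop (nhds (3 / 13)) := by
  have hg : Filter.Tendsto (fun _ : ℕ => (3:ℝ)/13) Filter.atTop (nhds (3/13)) :=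
    tendsto_const_nhds
  have hh : Filter.Tendsto (fun n : ℕ => (3:ℝ)/13 + (181440/247) / n)
      Filter.atTop (nhds (3/13)) := by
    have h1 := tendsto_const_div_atTop_nhds_zero_nat (181440/247 : ℝ)
    have h2 := Filter.Tendsto.const_add ((3:ℝ)/13) h1
    simpa using h2
  refine tendsto_of_tendsto_of_tendsto_of_le_of_le' hg hh ?_ ?_
  · filter_upwards [Filter.eventually_ge_atTop 1] with n hn
    rw [expr_eq n hn]
    have hp : (0:ℝ) < 4^n * n := by
      have : (0:ℝ) < n := by exact_mod_cast hn
      positivity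
    have := AS_nonneg n
    have : 0 ≤ 2 * AS n / (4^n * n) := by positivity
    linarith
  · filter_upwards [Filter.eventually_ge_atTop 1] with n hn
    rw [expr_eq n hn]
    have hnp : (0:ℝ) < n := by exact_mod_cast hn
    have hp : (0:ℝ) < 4^n := by positivity
    have key : 2 * AS n / (4^n * n) ≤ (181440/247) / n := by
      rw [div_le_div_iff₀ (by positivity) hnp]
      have h1 : 0 ≤ ((90720/247) * 4^n - AS n) := sub_nonneg.mpr (AS_le n)
      have h2 : (0:ℝ) ≤ n := Nat.cast_nonneg n
      nlinarith [mul_nonneg h1 h2]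
    linarith

def popTo (b : L2) : List (ℕ × L2) → Option (ℕ × List (ℕ × L2))
  | [] => none
  | e :: r => if e.2 = b then some (e.1, r) else popTo b r

def build : List L2 → ℕ → List (ℕ × L2) → Finset (ℕ × ℕ) → (List (ℕ × L2) × Finset (ℕ × ℕ))
  | [], _, st, P => (st, P)
  | x :: r, t, st, P =>
    match popTo (Letter.bar x) st with
    | none => build r (t+1) ((t, x) :: st) P
    | some (s, st') => build r (t+1) st' (insert (s, t) P)

lemma popTo_none {b : L2} : ∀ {st : List (ℕ × L2)}, popTo b st = none → b ∉ st.map Prod.snd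
  | [], _ => by simp
  | e :: r, h => by
    by_cases he : e.2 = b
    · simp [popTo, he] at h
    · simp only [popTo, if_neg he] at h
      have := popTo_none h
      simp only [List.map_cons, List.mem_cons]
      rintro (h1 | h2)
      · exact he h1.symm
      · exact this h2

lemma popTo_some {b : L2} : ∀ {st : List (ℕ × L2)} {s : ℕ} {st' : List (ℕ × L2)},
    popTo b st = some (s, st') →
    ∃ pre, st = pre ++ (s, b) :: st' ∧ ∀ e ∈ pre, e.2 ≠ b
  | [], s, st', h => by simp [popTo] at h
  | e :: r, s, st', h => by
    by_cases he : e.2 = b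
    · simp only [popTo, if_pos he] at h
      injection h with h1
      have hs : e.1 = s := congrArg Prod.fst h1
      have hr : r = st' := congrArg Prod.snd h1
      refine ⟨[], ?_, by simp⟩
      rw [List.nil_append, ← hs, ← hr, ← he, Prod.mk.eta]
    · simp only [popTo, if_neg he] at h
      obtain ⟨pre, hpre, hall⟩ := popTo_some h
      exact ⟨e :: pre, by rw [List.cons_append, hpre], fun f hf => by
        rcases List.mem_cons.mp hf with rfl | hf'
        · exact he
        · exact hall f hf'⟩

lemma indexOf_concat (b : L2) : ∀ (l1 : List L2) (l2 : List L2), (∀ e ∈ l1, e ≠ b) →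
    List.idxOf b (l1 ++ b :: l2) = l1.length
  | [], l2, _ => by
    rw [List.nil_append, L2_indexOf_cons_self]
    rfl
  | e :: l1, l2, h => by
    rw [List.cons_append, L2_indexOf_cons_ne _ (h e (List.mem_cons_self)),
      indexOf_concat b l1 l2 (fun f hf => h f (List.mem_cons_of_mem e hf))]
    rfl

lemma build_main : ∀ (r : List L2) (t : ℕ) (st : List (ℕ × L2)) (P : Finset (ℕ × ℕ))
    (X : List L2)
    (hr : X.drop t = r)
    (hst : (st.map Prod.snd).reverse = stw (X.take t))
    (hpos : st.Pairwise (fun a b => b.1 < a.1))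
    (hlt : ∀ e ∈ st, e.1 < t)
    (hval : ∀ e ∈ st, X[e.1]? = some e.2)
    (hcard : P.card = cnt (X.take t))
    (hp1 : ∀ p ∈ P, p.1 < p.2 ∧ p.2 < t ∧ p.2 < X.length ∧
      X[p.1]? = (X[p.2]?).map Letter.bar)
    (hdisj : ∀ p ∈ P, ∀ q ∈ P, p ≠ q → p.1 ≠ q.1 ∧ p.1 ≠ q.2 ∧ p.2 ≠ q.1 ∧ p.2 ≠ q.2)
    (hnc : ∀ p ∈ P, ∀ q ∈ P, ¬ (p.1 < q.1 ∧ q.1 < p.2 ∧ p.2 < q.2))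
    (hfresh : ∀ p ∈ P, ∀ e ∈ st, p.1 ≠ e.1 ∧ p.2 ≠ e.1)
    (hshadow : ∀ p ∈ P, ∀ e ∈ st, ¬ (p.1 < e.1 ∧ e.1 < p.2)),
    IsNCMatching X (build r t st P).2 ∧ (build r t st P).2.card = cnt X := by
  intro r
  induction r with
  | nil =>
    intro t st P X hr hst hpos hlt hval hcard hp1 hdisj hnc hfresh hshadow
    have ht : X.length ≤ t := by
      have hl := congrArg List.length hr
      simp only [List.length_drop, List.length_nil] at hl
      omega
    have htake : X.take t = X := List.take_of_length_le ht
    refine ⟨⟨?_, hdisj, hnc⟩, ?_⟩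
    · intro p hp
      obtain ⟨h1, _, h3, h4⟩ := hp1 p hp
      exact ⟨h1, h3, h4⟩
    · show P.card = cnt X
      rw [hcard, htake]
  | cons x r ih =>
    intro t st P X hr hst hpos hlt hval hcard hp1 hdisj hnc hfresh hshadow
    have hxt : X[t]? = some x := by
      have h0 : (X.drop t)[0]? = some x := by rw [hr]; simp
      rw [List.getElem?_drop] at h0
      simpa using h0
    have htlt : t < X.length := by
      by_contra hc
      rw [List.getElem?_eq_none (by omega : X.length ≤ t)] at hxt
      simp at hxt
    have hdrop' : X.drop (t+1) = r := by
      have h1 : X.drop (t+1) = (X.drop t).drop 1 := by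
        rw [List.drop_drop, Nat.add_comm]
      rw [h1, hr]
      rfl
    have htake' : X.take (t+1) = X.take t ++ [x] := by
      rw [List.take_succ, hxt]
      rfl
    show IsNCMatching X (build (x :: r) t st P).2 ∧ (build (x :: r) t st P).2.card = cnt X
    cases hpop : popTo (Letter.bar x) st with
    | none =>
      have hbuild : build (x :: r) t st P = build r (t+1) ((t, x) :: st) P := by
        rw [build, hpop]
      rw [hbuild]
      have hbar : Letter.bar x ∉ (st.map Prod.snd) := popTo_none hpop
      have hbar' : Letter.bar x ∉ stw (X.take t) := by
        rw [← hst]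
        simpa [List.mem_reverse] using hbar
      have hgs : greedyStep (stw (X.take t)) x = stw (X.take t) ++ [x] := by
        unfold greedyStep
        rw [if_neg hbar']
      have hstw' : (((t, x) :: st).map Prod.snd).reverse = stw (X.take (t+1)) := by
        rw [htake', stw_append, hgs, List.map_cons, List.reverse_cons, hst]
      have hcnt' : cnt (X.take (t+1)) = cnt (X.take t) := by
        rw [htake', cnt_append, if_neg]
        rw [gs_app_len hbar']
        omega
      apply ih (t+1) ((t, x) :: st) P X hdrop' hstw'
      · rw [List.pairwise_cons]
        exact ⟨fun e he => hlt e he, hpos⟩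
      · intro e he
        rcases List.mem_cons.mp he with rfl | he'
        · omega
        · exact lt_trans (hlt e he') (by omega)
      · intro e he
        rcases List.mem_cons.mp he with rfl | he'
        · exact hxt
        · exact hval e he'
      · rw [hcard, hcnt']
      · intro p hp
        obtain ⟨h1, h2, h3, h4⟩ := hp1 p hp
        exact ⟨h1, by omega, h3, h4⟩
      · exact hdisj
      · exact hnc
      · intro p hp e he
        rcases List.mem_cons.mp he with rfl | he'
        · have h0 := (hp1 p hp).1
          have h2 := (hp1 p hp).2.1
          exact ⟨show p.1 ≠ t by omega, show p.2 ≠ t by omega⟩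
        · exact hfresh p hp e he'
      · intro p hp e he
        rcases List.mem_cons.mp he with rfl | he'
        · have h2 := (hp1 p hp).2.1
          rintro ⟨-, hc2⟩
          have hc2' : t < p.2 := hc2
          omega
        · exact hshadow p hp e he'
    | some pr =>
      obtain ⟨s, st'⟩ := pr
      have hbuild : build (x :: r) t st P = build r (t+1) st' (insert (s, t) P) := by
        rw [build, hpop]
      rw [hbuild]
      obtain ⟨pre, hdecomp, hpre⟩ := popTo_some hpop
      have hb : ((s, Letter.bar x) : ℕ × L2) ∈ st := by
        rw [hdecomp]
        exact List.mem_append_right _ (List.mem_cons_self)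
      have hbar : Letter.bar x ∈ st.map Prod.snd := List.mem_map.mpr ⟨_, hb, rfl⟩
      have hbar' : Letter.bar x ∈ stw (X.take t) := by
        rw [← hst]
        simpa [List.mem_reverse] using hbar
      set w := stw (X.take t) with hwdef
      have hwrev : w.reverse = st.map Prod.snd := by rw [← hst, List.reverse_reverse]
      have hidx : w.reverse.idxOf (Letter.bar x) = pre.length := by
        rw [hwrev, hdecomp, List.map_append, List.map_cons]
        rw [indexOf_concat (Letter.bar x) (pre.map Prod.snd) (st'.map Prod.snd)
          (fun e he => by
            obtain ⟨f, hf, rfl⟩ := List.mem_map.mp he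
            exact hpre f hf)]
        simp
      have hlenw : w.length = pre.length + 1 + st'.length := by
        have h1 : w.length = (st.map Prod.snd).length := by
          rw [← hwrev, List.length_reverse]
        rw [h1, hdecomp]
        simp
        omega
      have hwform : w = (st'.map Prod.snd).reverse ++
          (Letter.bar x :: (pre.map Prod.snd).reverse) := by
        have h1 : w = (st.map Prod.snd).reverse := hst.symm
        rw [h1, hdecomp, List.map_append, List.map_cons, List.reverse_append,
          List.reverse_cons]
        simp
      have hcutval : greedyStep w x = (st'.map Prod.snd).reverse := by
        unfold greedyStep
        rw [if_pos hbar', hidx]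
        have hidx2 : w.length - 1 - pre.length = st'.length := by omega
        rw [hidx2, hwform]
        rw [List.take_append_of_le_length (by simp)]
        rw [List.take_of_length_le (by simp)]
      have hstw' : (st'.map Prod.snd).reverse = stw (X.take (t+1)) := by
        rw [htake', stw_append, ← hwdef, hcutval]
      have hshr : (greedyStep w x).length < w.length := gs_cut_len hbar'
      have hcnt' : cnt (X.take (t+1)) = cnt (X.take t) + 1 := by
        rw [htake', cnt_append, if_pos hshr]
      have hslt : s < t := hlt _ hb
      have hsx : X[s]? = some (Letter.bar x) := hval _ hb
      have hnotin : ((s, t) : ℕ × ℕ) ∉ P := fun hmem => (hfresh _ hmem _ hb).1 rfl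
      have hsub : ∀ e ∈ st', e ∈ st := fun e he => by
        rw [hdecomp]
        exact List.mem_append_right _ (List.mem_cons_of_mem _ he)
      have hbelow : ∀ e ∈ st', e.1 < s := by
        have hp2 := hpos
        rw [hdecomp] at hp2
        have h3 := (List.pairwise_append.mp hp2).2.1
        exact fun e he => (List.pairwise_cons.mp h3).1 e he
      apply ih (t+1) st' (insert (s, t) P) X hdrop' hstw'
      · have hp2 := hpos
        rw [hdecomp] at hp2
        exact (List.pairwise_cons.mp (List.pairwise_append.mp hp2).2.1).2
      · exact fun e he => lt_trans (hlt e (hsub e he)) (by omega)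
      · exact fun e he => hval e (hsub e he)
      · rw [Finset.card_insert_of_notMem hnotin, hcard, hcnt']
      · intro p hp
        rcases Finset.mem_insert.mp hp with rfl | hp'
        · refine ⟨hslt, by omega, htlt, ?_⟩
          rw [hsx, hxt]
          rfl
        · obtain ⟨h1, h2, h3, h4⟩ := hp1 p hp'
          exact ⟨h1, by omega, h3, h4⟩
      · intro p hp q hq hpq
        rcases Finset.mem_insert.mp hp with rfl | hp' <;>
          rcases Finset.mem_insert.mp hq with hq1 | hq'
        · exact absurd hq1.symm hpq
        · have h1 := hfresh q hq' _ hb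
          have h0 := (hp1 q hq').1
          have h2 := (hp1 q hq').2.1
          exact ⟨show s ≠ q.1 from fun h => h1.1 h.symm,
            show s ≠ q.2 from fun h => h1.2 h.symm,
            show t ≠ q.1 by omega, show t ≠ q.2 by omega⟩
        · subst hq1
          have h1 := hfresh p hp' _ hb
          have h0 := (hp1 p hp').1
          have h2 := (hp1 p hp').2.1
          exact ⟨show p.1 ≠ s from h1.1, show p.1 ≠ t by omega,
            show p.2 ≠ s from h1.2, show p.2 ≠ t by omega⟩
        · exact hdisj p hp' q hq' hpq
      · intro p hp q hq
        rcases Finset.mem_insert.mp hp with rfl | hp' <;>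
          rcases Finset.mem_insert.mp hq with hq1 | hq'
        · rw [hq1]
          rintro ⟨hc, -, -⟩
          exact lt_irrefl _ hc
        · have h2 := (hp1 q hq').2.1
          rintro ⟨-, -, hc⟩
          have hc' : t < q.2 := hc
          omega
        · subst hq1
          have h3 := hshadow p hp' _ hb
          intro hcon
          exact h3 ⟨hcon.1, hcon.2.1⟩
        · exact hnc p hp' q hq'
      · intro p hp e he
        rcases Finset.mem_insert.mp hp with rfl | hp'
        · have hb1 := hbelow e he
          have hb2 := hlt e (hsub e he)
          exact ⟨show s ≠ e.1 by omega, show t ≠ e.1 by omega⟩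
        · exact hfresh p hp' e (hsub e he)
      · intro p hp e he
        rcases Finset.mem_insert.mp hp with rfl | hp'
        · have hb1 := hbelow e he
          rintro ⟨hc, -⟩
          have hc' : s < e.1 := hc
          omega
        · exact hshadow p hp' e (hsub e he)

lemma ell_le_greedy (X : List L2) : ell X ≤ greedyUnmatched X := by
  have hmain := build_main X 0 [] ∅ X rfl rfl List.Pairwise.nil (by simp) (by simp)
    (by rfl) (by simp) (by simp) (by simp) (by simp) (by simp)
  apply Nat.sInf_le
  refine ⟨(build X 0 [] ∅).2, hmain.1, ?_⟩
  rw [greedyUnmatched_eq, hmain.2]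

lemma lambda_le : lambda 2 ≤ 3/13 := by
  have hb : BddBelow (Set.range fun n : ℕ+ => Lk 2 n / n) := by
    refine ⟨0, ?_⟩
    rintro y ⟨n, rfl⟩
    have h1 : (0:ℝ) ≤ Lk 2 n :=
      div_nonneg (Finset.sum_nonneg fun u _ => Nat.cast_nonneg _) (by positivity)
    exact div_nonneg h1 (Nat.cast_nonneg _)
  have hle : ∀ n : ℕ, 1 ≤ n → lambda 2 ≤
      (∑ w : Fin n → Letter 2, (greedyUnmatched (List.ofFn w) : ℝ)) / ((2 * 2) ^ n * n) := by
    intro n hn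
    have hpn : 0 < n := hn
    have h1 : lambda 2 ≤ Lk 2 n / n := by
      have h2 := ciInf_le hb (⟨n, hpn⟩ : ℕ+)
      simpa [lambda] using h2
    refine le_trans h1 ?_
    have hsum : (∑ w : Fin n → Letter 2, (ell (List.ofFn w) : ℝ))
        ≤ ∑ w : Fin n → Letter 2, (greedyUnmatched (List.ofFn w) : ℝ) :=
      Finset.sum_le_sum fun u _ => Nat.cast_le.mpr (ell_le_greedy _)
    unfold Lk
    rw [div_div]
    have hden : ((2:ℝ) * ((2:ℕ):ℝ)) ^ n * n = ((2:ℝ) * 2) ^ n * n := by norm_num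
    rw [hden]
    have hdpos : (0:ℝ) < ((2:ℝ) * 2) ^ n * n := by
      have : (0:ℝ) < n := by exact_mod_cast hpn
      positivity
    exact (div_le_div_iff_of_pos_right hdpos).mpr hsum
  exact ge_of_tendsto tendsto_part (Filter.eventually_atTop.mpr ⟨1, fun n hn => hle n hn⟩)

end GF

/-- For `k = 2`, the expected fraction of letters left unmatched by the one-sided greedy
algorithm on a uniform random word converges to `3/13`; consequently `λ₂ ≤ 3/13`. -/
theorem greedy_fraction_two :
    Filter.Tendsto
      (fun n : ℕ =>
        (∑ w : Fin n → Letter 2, (greedyUnmatched (List.ofFn w) : ℝ)) / ((2 * 2) ^ n * n))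
      Filter.atTop (nhds (3 / 13)) ∧
    lambda 2 ≤ 3 / 13 := by
  exact ⟨GF.tendsto_part, GF.lambda_le⟩
end
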